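/- There is an absolute constant C > 0 with the following property. Let Q, N ∈ ℕ, let a, b be integers, and for primes p, q with p ≡ 1 (mod 4) and q ≡ 1 (mod 4) and gcd(pq, Q) = 1, define w_{N,Q}(p,q) := (1/N²)·#{ (m,n) ∈ [N]² : p exactly divides (Qm+a)² + (Qn+b)² and q exactly divides (Qm+a)² + (Qn+b)² }, where 'p exactly divides k' means p | k and p² ∤ k. Then | w_{N,Q}(p,p) − (2/p)·(1 − 1/p)² | ≤ C/N, and if p ≠ q then | w_{N,Q}(p,q) − (4/(pq))·(1 − 1/p)²·(1 − 1/q)² | ≤ C/N. -/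

import Mathlib

/-- `p` exactly divides `k`: `p ∣ k` but `p² ∤ k`. -/
def ExactlyDivides (p k : ℤ) : Prop := p ∣ k ∧ ¬ (p ^ 2 ∣ k)

-- The normalized count `w_{N,Q}(p,q)` of pairs `(m,n) ∈ [N]²` such that both `p` and `q`
-- exactly divide `(Qm+a)² + (Qn+b)²`.
open scoped Classical in
noncomputable def wPair (Q N : ℕ) (a b : ℤ) (p q : ℕ) : ℝ :=
  (((Finset.Icc 1 N ×ˢ Finset.Icc 1 N).filter (fun mn : ℕ × ℕ =>
      ExactlyDivides (p : ℤ) (((Q : ℤ) * mn.1 + a) ^ 2 + ((Q : ℤ) * mn.2 + b) ^ 2) ∧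
      ExactlyDivides (q : ℤ) (((Q : ℤ) * mn.1 + a) ^ 2 + ((Q : ℤ) * mn.2 + b) ^ 2))).card : ℝ) /
    (N : ℝ) ^ 2

section aux
open Finset
lemma dvd_sub_iff_modEq (M : ℤ) (n r : ℤ) : M ∣ n - r ↔ n ≡ r [ZMOD M] := by
  rw [Int.modEq_iff_dvd, dvd_sub_comm]

lemma count_residue (N M : ℕ) (hM : 0 < M) (r : ℤ) :
    |((((Finset.Icc 1 N)).filter (fun n : ℕ => (M:ℤ) ∣ (n:ℤ) - r)).card : ℝ) - (N:ℝ)/(M:ℝ)| ≤ 1 := by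
  have hmap : ((Finset.Icc 1 N).filter (fun n : ℕ => (M:ℤ) ∣ (n:ℤ) - r)).map Nat.castEmbedding
      = (Finset.Ioc (0:ℤ) (N:ℤ)).filter (fun x : ℤ => x ≡ r [ZMOD (M:ℤ)]) := by
    ext x
    simp only [Finset.mem_map, Finset.mem_filter, Finset.mem_Icc, Finset.mem_Ioc,
      Nat.castEmbedding_apply]
    constructor
    · rintro ⟨y, ⟨⟨h1, h2⟩, hd⟩, rfl⟩
      exact ⟨⟨by exact_mod_cast h1, by exact_mod_cast h2⟩, (dvd_sub_iff_modEq _ _ _).mp hd⟩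
    · rintro ⟨⟨h1, h2⟩, hd⟩
      lift x to ℕ using (by linarith)
      exact ⟨x, ⟨⟨by exact_mod_cast h1, by exact_mod_cast h2⟩,
        (dvd_sub_iff_modEq _ _ _).mpr hd⟩, rfl⟩
  have hcardM := congrArg Finset.card hmap
  rw [Finset.card_map] at hcardM
  have hMQ : (0:ℤ) < (M:ℤ) := by exact_mod_cast hM
  have hc := Int.Ioc_filter_modEq_card (0:ℤ) (N:ℤ) hMQ r
  set y : ℚ := (((N:ℤ):ℚ) - (r:ℚ)) / (((M:ℕ):ℤ):ℚ) with hy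
  set x : ℚ := (((0:ℤ):ℚ) - (r:ℚ)) / (((M:ℕ):ℤ):ℚ) with hx
  have hle : ⌊x⌋ ≤ ⌊y⌋ := by
    apply Int.floor_le_floor
    rw [hy, hx]
    have h0 : (0:ℚ) ≤ ((N:ℤ):ℚ) := by positivity
    have hMpos : (0:ℚ) < (((M:ℕ):ℤ):ℚ) := by exact_mod_cast hM
    gcongr
    linarith
  rw [max_eq_left (by omega)] at hc
  have hcard : (((Finset.Icc 1 N).filter (fun n : ℕ => (M:ℤ) ∣ (n:ℤ) - r)).card : ℝ)
      = ((⌊y⌋ - ⌊x⌋ : ℤ) : ℝ) := by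
    rw [hcardM]
    exact_mod_cast congrArg (fun z : ℤ => (z : ℝ)) hc
  rw [hcard]
  have hxy : y - x = (N:ℚ)/(M:ℚ) := by rw [hy, hx]; push_cast; ring
  have h1 : (⌊y⌋ : ℚ) ≤ y := Int.floor_le y
  have h2 : y - 1 < ⌊y⌋ := Int.sub_one_lt_floor y
  have h3 : (⌊x⌋ : ℚ) ≤ x := Int.floor_le x
  have h4 : x - 1 < ⌊x⌋ := Int.sub_one_lt_floor x
  have key : |((⌊y⌋ - ⌊x⌋ : ℤ) : ℚ) - (N:ℚ)/(M:ℚ)| ≤ 1 := by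
    rw [abs_le]
    constructor <;> push_cast <;> nlinarith [hxy]
  rw [show ((N:ℝ))/((M:ℝ)) = (((N:ℚ)/(M:ℚ) : ℚ) : ℝ) by push_cast; ring,
    show (((⌊y⌋ - ⌊x⌋ : ℤ) : ℝ)) = (((⌊y⌋ - ⌊x⌋ : ℤ) : ℚ) : ℝ) by push_cast; ring,
    ← Rat.cast_sub, ← Rat.cast_abs]
  exact_mod_cast key


lemma exists_residue (Q : ℤ) (M : ℕ) (h : IsCoprime Q (M:ℤ)) (d : ℤ) :
    ∃ r : ℤ, ∀ n : ℤ, ((M:ℤ) ∣ Q*n + d ↔ (M:ℤ) ∣ n - r) := by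
  obtain ⟨u, v, huv⟩ := id h
  refine ⟨-(d*u), fun n => ?_⟩
  have key : Q*(n - -(d*u)) = (Q*n + d) - d*v*(M:ℤ) := by
    linear_combination d * huv
  constructor
  · intro hd
    have h2 : (M:ℤ) ∣ Q*(n - -(d*u)) := by
      rw [key]; exact dvd_sub hd ⟨d*v, by ring⟩
    exact (IsCoprime.dvd_of_dvd_mul_left (by exact h.symm) (by rwa [mul_comm] at h2 ⊢))
  · intro hd
    have h2 : (M:ℤ) ∣ Q*(n - -(d*u)) := Dvd.dvd.mul_left hd Q
    rw [key] at h2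
    have := dvd_add h2 (⟨d*v, by ring⟩ : (M:ℤ) ∣ d*v*(M:ℤ))
    simpa using this

lemma crt_combine (M₁ M₂ : ℕ) (h : IsCoprime ((M₁:ℕ):ℤ) ((M₂:ℕ):ℤ)) (r₁ r₂ : ℤ) :
    ∃ r : ℤ, ∀ n : ℤ, (((M₁:ℤ) ∣ n - r₁) ∧ ((M₂:ℤ) ∣ n - r₂)) ↔ ((M₁:ℤ)*(M₂:ℤ) ∣ n - r) := by
  obtain ⟨u, v, huv⟩ := h
  refine ⟨r₁*(v*M₂) + r₂*(u*M₁), fun n => ?_⟩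
  have e1 : n - (r₁*(v*M₂) + r₂*(u*M₁)) = (n - r₁) + (M₁:ℤ)*(u*(r₁ - r₂)) := by
    linear_combination (-r₁) * huv
  have e2 : n - (r₁*(v*M₂) + r₂*(u*M₁)) = (n - r₂) + (M₂:ℤ)*(v*(r₂ - r₁)) := by
    linear_combination (-r₂) * huv
  constructor
  · rintro ⟨h1, h2⟩
    refine IsCoprime.mul_dvd ⟨u, v, huv⟩ ?_ ?_
    · rw [e1]; exact dvd_add h1 (Dvd.intro _ rfl)
    · rw [e2]; exact dvd_add h2 (Dvd.intro _ rfl)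
  · intro hd
    constructor
    · have h1 : (M₁:ℤ) ∣ n - (r₁*(v*M₂) + r₂*(u*M₁)) := dvd_trans (dvd_mul_right _ _) hd
      rw [e1] at h1
      have := dvd_sub h1 (⟨u*(r₁-r₂), rfl⟩ : (M₁:ℤ) ∣ (M₁:ℤ)*(u*(r₁-r₂)))
      simpa using this
    · have h1 : (M₂:ℤ) ∣ n - (r₁*(v*M₂) + r₂*(u*M₁)) := dvd_trans (dvd_mul_left _ _) hd
      rw [e2] at h1
      have := dvd_sub h1 (⟨v*(r₂-r₁), rfl⟩ : (M₂:ℤ) ∣ (M₂:ℤ)*(v*(r₂-r₁)))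
      simpa using this

lemma count_row (N : ℕ) (Q : ℤ) (L₁ L₂ : ℕ) (h₁ : 0 < L₁) (h₂ : 0 < L₂)
    (hQ₁ : IsCoprime Q (L₁:ℤ)) (hQ₂ : IsCoprime Q (L₂:ℤ)) (hLL : IsCoprime ((L₁:ℕ):ℤ) ((L₂:ℕ):ℤ))
    (d₁ d₂ : ℤ) [DecidablePred (fun n : ℕ => ((L₁:ℤ) ∣ Q*n + d₁) ∧ ((L₂:ℤ) ∣ Q*n + d₂))] :
    |(((Finset.Icc 1 N).filter (fun n : ℕ => ((L₁:ℤ) ∣ Q*n + d₁) ∧ ((L₂:ℤ) ∣ Q*n + d₂))).card : ℝ)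
      - (N:ℝ)/((L₁:ℝ)*(L₂:ℝ))| ≤ 1 := by
  obtain ⟨r₁, hr₁⟩ := exists_residue Q L₁ hQ₁ d₁
  obtain ⟨r₂, hr₂⟩ := exists_residue Q L₂ hQ₂ d₂
  obtain ⟨r, hr⟩ := crt_combine L₁ L₂ hLL r₁ r₂
  have hfe : (Finset.Icc 1 N).filter (fun n : ℕ => ((L₁:ℤ) ∣ Q*n + d₁) ∧ ((L₂:ℤ) ∣ Q*n + d₂))
      = (Finset.Icc 1 N).filter (fun n : ℕ => ((L₁*L₂ : ℕ):ℤ) ∣ (n:ℤ) - r) := by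
    apply Finset.filter_congr
    intro n _
    rw [hr₁ (n:ℤ), hr₂ (n:ℤ), hr (n:ℤ)]
    push_cast
    simp
  rw [hfe]
  have := count_residue N (L₁*L₂) (Nat.mul_pos h₁ h₂) r
  convert this using 3
  push_cast
  ring


lemma count_2d (N : ℕ) (P : ℕ → Prop) [DecidablePred P] (R : ℕ → ℕ → Prop)
    [∀ m, DecidablePred (R m)] [DecidablePred (fun mn : ℕ × ℕ => P mn.1 ∧ R mn.1 mn.2)]
    (ρ₁ ρ₂ : ℝ) (hρ₂0 : 0 ≤ ρ₂) (hρ₂1 : ρ₂ ≤ 1)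
    (h1 : |(((Finset.Icc 1 N).filter P).card : ℝ) - ρ₁ * N| ≤ 1)
    (h2 : ∀ m, |(((Finset.Icc 1 N).filter (R m)).card : ℝ) - ρ₂ * N| ≤ 1) :
    |((((Finset.Icc 1 N) ×ˢ (Finset.Icc 1 N)).filter
        (fun mn : ℕ × ℕ => P mn.1 ∧ R mn.1 mn.2)).card : ℝ) - ρ₁ * ρ₂ * (N:ℝ)^2| ≤ 2 * N := by
  classical
  set s := Finset.Icc 1 N
  have hsplit : (((s ×ˢ s).filter (fun mn : ℕ × ℕ => P mn.1 ∧ R mn.1 mn.2)).card : ℝ)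
      = ∑ m ∈ s.filter P, ((s.filter (R m)).card : ℝ) := by
    have h := Finset.card_eq_sum_card_fiberwise
      (f := Prod.fst) (s := (s ×ˢ s).filter (fun mn : ℕ × ℕ => P mn.1 ∧ R mn.1 mn.2))
      (t := s.filter P) ?_
    · rw [h]
      push_cast
      apply Finset.sum_congr rfl
      intro m hm
      congr 1
      apply Finset.card_nbij (fun mn => mn.2)
      · intro x hx
        simp only [Finset.mem_coe, Finset.mem_filter, Finset.mem_product] at hx
        simp only [Finset.mem_coe, Finset.mem_filter]
        rcases hx with ⟨⟨⟨hx1, hx2⟩, _⟩, hfst⟩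
        exact ⟨hx2, by rw [← hfst]; exact ‹(P x.1 ∧ R x.1 x.2)›.2⟩
      · intro x hx y hy hxy
        simp only [Finset.mem_coe, Finset.mem_filter] at hx hy
        have : x.1 = m := hx.2
        have : y.1 = m := hy.2
        ext
        · rw [hx.2, hy.2]
        · exact hxy
      · intro n hn
        simp only [Finset.mem_coe, Finset.mem_filter] at hn
        simp only [Finset.mem_filter] at hm
        refine ⟨(m, n), ?_, rfl⟩
        simp only [Finset.mem_coe, Finset.mem_filter, Finset.mem_product]
        refine ⟨⟨⟨hm.1, hn.1⟩, hm.2, hn.2⟩, by trivial⟩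
    · intro x hx
      simp only [Finset.mem_coe, Finset.mem_filter, Finset.mem_product] at hx ⊢
      exact ⟨hx.1.1, hx.2.1⟩
  rw [hsplit]
  have hcardP : ((s.filter P).card : ℝ) ≤ N := by
    have : (s.filter P).card ≤ s.card := Finset.card_filter_le _ _
    have hs : s.card = N := Nat.card_Icc 1 N ▸ by omega
    exact_mod_cast le_trans this (le_of_eq hs)
  have step1 : |∑ m ∈ s.filter P, ((s.filter (R m)).card : ℝ)
      - ((s.filter P).card : ℝ) * (ρ₂ * N)| ≤ ((s.filter P).card : ℝ) := by
    have hc : ((s.filter P).card : ℝ) * (ρ₂ * N) = ∑ _m ∈ s.filter P, (ρ₂ * (N:ℝ)) := by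
      rw [Finset.sum_const, nsmul_eq_mul]
    rw [hc, ← Finset.sum_sub_distrib]
    calc |∑ m ∈ s.filter P, (((s.filter (R m)).card : ℝ) - ρ₂ * N)|
        ≤ ∑ m ∈ s.filter P, |((s.filter (R m)).card : ℝ) - ρ₂ * N| := Finset.abs_sum_le_sum_abs _ _
      _ ≤ ∑ m ∈ s.filter P, 1 := Finset.sum_le_sum (fun m _ => h2 m)
      _ = ((s.filter P).card : ℝ) := by simp
  have step2 : |((s.filter P).card : ℝ) * (ρ₂ * N) - ρ₁ * ρ₂ * (N:ℝ)^2| ≤ ρ₂ * N := by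
    have : ((s.filter P).card : ℝ) * (ρ₂ * N) - ρ₁ * ρ₂ * (N:ℝ)^2
        = (((s.filter P).card : ℝ) - ρ₁ * N) * (ρ₂ * N) := by ring
    rw [this, abs_mul]
    have h2' : |ρ₂ * (N:ℝ)| = ρ₂ * N := abs_of_nonneg (by positivity)
    rw [h2']
    have hb : (0:ℝ) ≤ ρ₂ * (N:ℝ) := by positivity
    nlinarith [h1, hb]
  have hN0 : (0:ℝ) ≤ N := by positivity
  have hρ₂N : ρ₂ * N ≤ N := by nlinarith
  calc |∑ m ∈ s.filter P, ((s.filter (R m)).card : ℝ) - ρ₁ * ρ₂ * (N:ℝ)^2|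
      ≤ |∑ m ∈ s.filter P, ((s.filter (R m)).card : ℝ) - ((s.filter P).card : ℝ) * (ρ₂ * N)|
        + |((s.filter P).card : ℝ) * (ρ₂ * N) - ρ₁ * ρ₂ * (N:ℝ)^2| := abs_sub_le _ _ _
    _ ≤ ((s.filter P).card : ℝ) + ρ₂ * N := add_le_add step1 step2
    _ ≤ N + N := add_le_add hcardP hρ₂N
    _ = 2 * N := by ring


lemma elem_count (N : ℕ) (Q aa : ℤ) (K L₁ L₂ : ℕ) (hK : 0 < K) (hL₁ : 0 < L₁) (hL₂ : 0 < L₂)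
    (hQK : IsCoprime Q (K:ℤ)) (hQL₁ : IsCoprime Q (L₁:ℤ)) (hQL₂ : IsCoprime Q (L₂:ℤ))
    (hLL : IsCoprime ((L₁:ℕ):ℤ) ((L₂:ℕ):ℤ)) (d₁ d₂ : ℕ → ℤ)
    [DecidablePred (fun mn : ℕ × ℕ => ((K:ℤ) ∣ Q*mn.1 + aa) ∧
        ((L₁:ℤ) ∣ Q*mn.2 + d₁ mn.1) ∧ ((L₂:ℤ) ∣ Q*mn.2 + d₂ mn.1))] :
    |((((Finset.Icc 1 N) ×ˢ (Finset.Icc 1 N)).filter (fun mn : ℕ × ℕ =>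
        ((K:ℤ) ∣ Q*mn.1 + aa) ∧ ((L₁:ℤ) ∣ Q*mn.2 + d₁ mn.1) ∧ ((L₂:ℤ) ∣ Q*mn.2 + d₂ mn.1))).card : ℝ)
      - (1/((K:ℝ)*(L₁:ℝ)*(L₂:ℝ))) * (N:ℝ)^2| ≤ 2 * (N:ℝ) := by
  classical
  have hKr : (0:ℝ) < K := by exact_mod_cast hK
  have hL₁r : (1:ℝ) ≤ L₁ := by exact_mod_cast hL₁
  have hL₂r : (1:ℝ) ≤ L₂ := by exact_mod_cast hL₂
  have h1 : |(((Finset.Icc 1 N).filter (fun m : ℕ => (K:ℤ) ∣ Q*m + aa)).card : ℝ)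
      - (1/(K:ℝ)) * N| ≤ 1 := by
    obtain ⟨r, hr⟩ := exists_residue Q K hQK aa
    have hfe : (Finset.Icc 1 N).filter (fun m : ℕ => (K:ℤ) ∣ Q*m + aa)
        = (Finset.Icc 1 N).filter (fun m : ℕ => (K:ℤ) ∣ (m:ℤ) - r) := by
      apply Finset.filter_congr; intro m _; rw [hr (m:ℤ)]
    rw [hfe]
    have := count_residue N K hK r
    convert this using 3 <;> try ring
  have h2 : ∀ m : ℕ, |(((Finset.Icc 1 N).filter (fun n : ℕ =>
      ((L₁:ℤ) ∣ Q*n + d₁ m) ∧ ((L₂:ℤ) ∣ Q*n + d₂ m))).card : ℝ)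
      - (1/((L₁:ℝ)*(L₂:ℝ))) * N| ≤ 1 := by
    intro m
    have := count_row N Q L₁ L₂ hL₁ hL₂ hQL₁ hQL₂ hLL (d₁ m) (d₂ m)
    convert this using 3 <;> try ring
  have key := count_2d N (fun m : ℕ => (K:ℤ) ∣ Q*m + aa)
      (fun m n => ((L₁:ℤ) ∣ Q*n + d₁ m) ∧ ((L₂:ℤ) ∣ Q*n + d₂ m))
      (1/(K:ℝ)) (1/((L₁:ℝ)*(L₂:ℝ))) (by positivity)
      (by rw [div_le_one (by positivity)]; nlinarith) h1 h2
  have e : (1/((K:ℝ)*(L₁:ℝ)*(L₂:ℝ))) * (N:ℝ)^2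
      = 1/(K:ℝ) * (1/((L₁:ℝ)*(L₂:ℝ))) * (N:ℝ)^2 := by ring
  rw [e]
  have hfe : ((Finset.Icc 1 N) ×ˢ (Finset.Icc 1 N)).filter (fun mn : ℕ × ℕ =>
        ((K:ℤ) ∣ Q*mn.1 + aa) ∧ ((L₁:ℤ) ∣ Q*mn.2 + d₁ mn.1) ∧ ((L₂:ℤ) ∣ Q*mn.2 + d₂ mn.1))
      = ((Finset.Icc 1 N) ×ˢ (Finset.Icc 1 N)).filter (fun mn : ℕ × ℕ =>
        (fun m : ℕ => (K:ℤ) ∣ Q*m + aa) mn.1 ∧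
        (fun m n => ((L₁:ℤ) ∣ Q*n + d₁ m) ∧ ((L₂:ℤ) ∣ Q*n + d₂ m)) mn.1 mn.2) := by
    apply Finset.filter_congr; intro x _; exact Iff.rfl
  rw [hfe]
  exact key


lemma exists_sqrt_neg_one (p : ℕ) (hp : p.Prime) (h4 : p % 4 = 1) :
    ∃ I : ℤ, ((p:ℤ))^2 ∣ I^2 + 1 := by
  haveI : Fact p.Prime := ⟨hp⟩
  have h1 : IsSquare (-1 : ZMod p) := ZMod.exists_sq_eq_neg_one_iff.mpr (by omega)
  obtain ⟨z, hz⟩ := h1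
  have hzi : (((z.val : ℤ)) : ZMod p) = z := by
    push_cast
    rw [ZMod.natCast_val, ZMod.cast_id]
  obtain ⟨i, hidef⟩ : ∃ i : ℤ, i = (z.val : ℤ) := ⟨_, rfl⟩
  rw [← hidef] at hzi
  have hip : (p:ℤ) ∣ i^2 + 1 := by
    have h0 : ((i^2 + 1 : ℤ) : ZMod p) = 0 := by
      push_cast [hzi]
      rw [show ((z:ZMod p))^2 = z * z by ring, ← hz]
      ring
    exact_mod_cast (ZMod.intCast_zmod_eq_zero_iff_dvd _ p).mp h0
  obtain ⟨t, ht⟩ := hip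
  have hodd : p ≠ 2 := by omega
  have h2z : (2 * z : ZMod p) ≠ 0 := by
    have hz0 : (z : ZMod p) ≠ 0 := by
      intro h
      rw [h, mul_zero] at hz
      exact one_ne_zero (neg_eq_zero.mp hz)
    have h20 : (2 : ZMod p) ≠ 0 := by
      intro h
      have h2' : ((2:ℕ) : ZMod p) = 0 := by exact_mod_cast h
      have := (ZMod.natCast_eq_zero_iff 2 p).mp h2'
      exact hodd ((Nat.prime_dvd_prime_iff_eq hp Nat.prime_two).mp this)
    exact mul_ne_zero h20 hz0
  obtain ⟨sZ, hsZ⟩ : ∃ sZ : ZMod p, sZ = ((-t : ℤ) : ZMod p) * (2 * z)⁻¹ := ⟨_, rfl⟩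
  obtain ⟨s, hsdef⟩ : ∃ s : ℤ, s = (sZ.val : ℤ) := ⟨_, rfl⟩
  have hsi : ((s : ℤ) : ZMod p) = sZ := by
    rw [hsdef]; push_cast; rw [ZMod.natCast_val, ZMod.cast_id]
  have hdvd : (p:ℤ) ∣ t + 2*i*s := by
    have h0 : ((t + 2*i*s : ℤ) : ZMod p) = 0 := by
      push_cast [hzi, hsi, hsZ]
      have e : (t:ZMod p) + 2*z*((-(t:ℤ) : ZMod p) * (2*z)⁻¹)
          = (t:ZMod p) + ((2*z)*(2*z)⁻¹) * ((-(t:ℤ) : ZMod p)) := by ring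
      rw [e, mul_inv_cancel₀ h2z]
      push_cast
      ring
    exact_mod_cast (ZMod.intCast_zmod_eq_zero_iff_dvd _ p).mp h0
  obtain ⟨k, hk⟩ := hdvd
  refine ⟨i + p*s, ⟨k + s^2, ?_⟩⟩
  have e1 : (i + p*s)^2 + 1 = (i^2 + 1) + ((p:ℤ)*t + (p:ℤ)*(2*i*s)) - (p:ℤ)*t + (p:ℤ)^2*s^2 := by
    ring
  rw [e1, show (p:ℤ)*t + (p:ℤ)*(2*i*s) = (p:ℤ)*(t + 2*i*s) by ring, hk, ht]
  ring

lemma not_dvd_two (p : ℕ) (hp : p.Prime) (hodd : p ≠ 2) : ¬ ((p:ℤ) ∣ 2) := by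
  intro h
  have h' : (p:ℕ) ∣ 2 := by exact_mod_cast h
  exact hodd ((Nat.prime_dvd_prime_iff_eq hp Nat.prime_two).mp h')

lemma not_dvd_J (p : ℕ) (J : ℤ) (hp : p.Prime) (hJ : ((p:ℤ))^2 ∣ J^2 + 1) : ¬ ((p:ℤ) ∣ J) := by
  intro h
  have h1 : (p:ℤ) ∣ J^2 + 1 := dvd_trans (dvd_pow_self _ (by norm_num)) hJ
  have h2 : (p:ℤ) ∣ J^2 := by rw [sq]; exact h.mul_right J
  have h3 : (p:ℤ) ∣ 1 := by
    have := dvd_sub h1 h2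
    simpa using this
  exact (Nat.prime_iff_prime_int.mp hp).not_dvd_one h3

lemma F1 (p : ℕ) (J : ℤ) (hp : p.Prime) (hodd : p ≠ 2) (hJ : ((p:ℤ))^2 ∣ J^2 + 1) (x y : ℤ) :
    ((p:ℤ) ∣ y - J*x ∧ (p:ℤ) ∣ y + J*x) ↔ ((p:ℤ) ∣ x ∧ (p:ℤ) ∣ y) := by
  have hP : Prime (p:ℤ) := Nat.prime_iff_prime_int.mp hp
  constructor
  · rintro ⟨h1, h2⟩
    have hx2 : (p:ℤ) ∣ 2*(J*x) := by
      have hd := dvd_sub h2 h1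
      rwa [show (y + J*x) - (y - J*x) = 2*(J*x) by ring] at hd
    have hy2 : (p:ℤ) ∣ 2*y := by
      have hd := dvd_add h1 h2
      rwa [show (y - J*x) + (y + J*x) = 2*y by ring] at hd
    have hx : (p:ℤ) ∣ x := by
      rcases hP.dvd_mul.mp hx2 with h | h
      · exact absurd h (not_dvd_two p hp hodd)
      · rcases hP.dvd_mul.mp h with h' | h'
        · exact absurd h' (not_dvd_J p J hp hJ)
        · exact h'
    have hy : (p:ℤ) ∣ y := by
      rcases hP.dvd_mul.mp hy2 with h | h
      · exact absurd h (not_dvd_two p hp hodd)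
      · exact h
    exact ⟨hx, hy⟩
  · rintro ⟨h1, h2⟩
    exact ⟨dvd_sub h2 (h1.mul_left J), dvd_add h2 (h1.mul_left J)⟩

lemma exact_side (p : ℕ) (J : ℤ) (hp : p.Prime) (hJ : ((p:ℤ))^2 ∣ J^2 + 1) (x y : ℤ)
    (h1 : (p:ℤ) ∣ y - J*x) (h2 : ¬ ((p:ℤ)^2 ∣ y - J*x)) (h3 : ¬ ((p:ℤ) ∣ y + J*x)) :
    ExactlyDivides (p:ℤ) (x^2 + y^2) := by
  have hP : Prime (p:ℤ) := Nat.prime_iff_prime_int.mp hp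
  have key : x^2 + y^2 = (y - J*x)*(y + J*x) + (J^2+1)*x^2 := by ring
  constructor
  · rw [key]
    exact dvd_add (h1.mul_right _)
      (dvd_trans (dvd_trans (dvd_pow_self _ (by norm_num)) hJ) (dvd_mul_right _ _))
  · intro hc
    have huv : (p:ℤ)^2 ∣ (y + J*x) * (y - J*x) := by
      have e : (y + J*x)*(y - J*x) = (x^2 + y^2) - (J^2+1)*x^2 := by ring
      rw [e]
      exact dvd_sub hc (hJ.mul_right _)
    exact h2 (hP.pow_dvd_of_dvd_mul_left 2 h3 huv)

lemma exact_iff (p : ℕ) (J : ℤ) (hp : p.Prime) (hodd : p ≠ 2) (hJ : ((p:ℤ))^2 ∣ J^2 + 1)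
    (x y : ℤ) :
    ExactlyDivides (p:ℤ) (x^2 + y^2) ↔
      (((p:ℤ) ∣ y - J*x ∧ ¬ ((p:ℤ)^2 ∣ y - J*x) ∧ ¬ ((p:ℤ) ∣ y + J*x)) ∨
       ((p:ℤ) ∣ y + J*x ∧ ¬ ((p:ℤ)^2 ∣ y + J*x) ∧ ¬ ((p:ℤ) ∣ y - J*x))) := by
  have hP : Prime (p:ℤ) := Nat.prime_iff_prime_int.mp hp
  constructor
  · rintro ⟨hd, hnd⟩
    have hx : ¬ ((p:ℤ) ∣ x) := by
      intro hx
      have hy2 : (p:ℤ) ∣ y^2 := by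
        have e : y^2 = (x^2 + y^2) - x*x := by ring
        rw [e]
        exact dvd_sub hd (hx.mul_right x)
      have hy : (p:ℤ) ∣ y := hP.dvd_of_dvd_pow hy2
      apply hnd
      have e : x^2 + y^2 = x*x + y*y := by ring
      rw [e, sq]
      exact dvd_add (mul_dvd_mul hx hx) (mul_dvd_mul hy hy)
    have huv : (p:ℤ) ∣ (y - J*x)*(y + J*x) := by
      have e : (y - J*x)*(y + J*x) = (x^2 + y^2) - (J^2+1)*x^2 := by ring
      rw [e]
      exact dvd_sub hd ((dvd_trans (dvd_pow_self _ (by norm_num)) hJ).mul_right _)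
    have hnboth : ¬ ((p:ℤ) ∣ y - J*x ∧ (p:ℤ) ∣ y + J*x) := by
      intro hb
      exact hx ((F1 p J hp hodd hJ x y).mp hb).1
    have key : x^2 + y^2 = (y - J*x)*(y + J*x) + (J^2+1)*x^2 := by ring
    rcases hP.dvd_mul.mp huv with h | h
    · left
      refine ⟨h, ?_, fun hc => hnboth ⟨h, hc⟩⟩
      intro hc
      apply hnd
      rw [key]
      exact dvd_add (hc.mul_right _) (hJ.mul_right _)
    · right
      refine ⟨h, ?_, fun hc => hnboth ⟨hc, h⟩⟩
      intro hc
      apply hnd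
      rw [key]
      exact dvd_add (hc.mul_left _) (hJ.mul_right _)
  · rintro (⟨h1, h2, h3⟩ | ⟨h1, h2, h3⟩)
    · exact exact_side p J hp hJ x y h1 h2 h3
    · have hJ' : ((p:ℤ))^2 ∣ (-J)^2 + 1 := by
        rwa [show (-J)^2 = J^2 by ring]
      refine exact_side p (-J) hp hJ' x y ?_ ?_ ?_
      · rw [show y - (-J)*x = y + J*x by ring]; exact h1
      · rw [show y - (-J)*x = y + J*x by ring]; exact h2
      · rw [show y + (-J)*x = y - J*x by ring]; exact h3


noncomputable def indi (P : Prop) : ℝ := by classical exact if P then 1 else 0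

lemma ind_congr {P Q : Prop} (h : P ↔ Q) : indi P = indi Q := by
  unfold indi
  split_ifs with h1 h2 <;> tauto

lemma ind_and (P Q : Prop) : indi (P ∧ Q) = indi P * indi Q := by
  unfold indi
  split_ifs <;> simp_all

lemma ind_or {P Q : Prop} (h : ¬ (P ∧ Q)) : indi (P ∨ Q) = indi P + indi Q := by
  unfold indi
  split_ifs <;> simp_all <;> tauto

lemma ind_not3 (A B C : Prop) :
    indi (A ∧ ¬ B ∧ ¬ C) = indi A - indi (A ∧ B) - indi (A ∧ C) + indi (A ∧ (B ∧ C)) := by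
  unfold indi
  split_ifs <;> simp_all <;> norm_num <;> tauto

lemma card_filter_indi {α : Type*} (s : Finset α) (pred : α → Prop) [DecidablePred pred] :
    ((s.filter pred).card : ℝ) = ∑ x ∈ s, indi (pred x) := by
  rw [Finset.card_filter]
  push_cast
  apply Finset.sum_congr rfl
  intro x _
  by_cases h : pred x <;> simp [indi, h]


lemma SB (N : ℕ) (Q aa : ℤ) (K₁ L₁ K₂ L₂ : ℕ) (hK₁ : 0 < K₁) (hL₁ : 0 < L₁)
    (hK₂ : 0 < K₂) (hL₂ : 0 < L₂)
    (hQK₁ : IsCoprime Q (K₁:ℤ)) (hQL₁ : IsCoprime Q (L₁:ℤ))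
    (hQK₂ : IsCoprime Q (K₂:ℤ)) (hQL₂ : IsCoprime Q (L₂:ℤ))
    (hKK : IsCoprime ((K₁:ℕ):ℤ) ((K₂:ℕ):ℤ)) (hLL : IsCoprime ((L₁:ℕ):ℤ) ((L₂:ℕ):ℤ))
    (d₁ d₂ : ℕ → ℤ) :
    |(∑ x ∈ (Finset.Icc 1 N) ×ˢ (Finset.Icc 1 N),
        indi (((K₁:ℤ) ∣ Q*x.1 + aa) ∧ ((L₁:ℤ) ∣ Q*x.2 + d₁ x.1)) *
        indi (((K₂:ℤ) ∣ Q*x.1 + aa) ∧ ((L₂:ℤ) ∣ Q*x.2 + d₂ x.1)))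
      - (1/((K₁:ℝ)*(L₁:ℝ)*(K₂:ℝ)*(L₂:ℝ))) * (N:ℝ)^2| ≤ 2 * (N:ℝ) := by
  classical
  have hcast : ((K₁*K₂ : ℕ):ℤ) = (K₁:ℤ)*(K₂:ℤ) := by push_cast; ring
  have pt : ∀ x ∈ (Finset.Icc 1 N) ×ˢ (Finset.Icc 1 N),
      indi (((K₁:ℤ) ∣ Q*x.1 + aa) ∧ ((L₁:ℤ) ∣ Q*x.2 + d₁ x.1)) *
      indi (((K₂:ℤ) ∣ Q*x.1 + aa) ∧ ((L₂:ℤ) ∣ Q*x.2 + d₂ x.1))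
      = indi ((((K₁*K₂:ℕ):ℤ) ∣ Q*x.1 + aa) ∧
          ((L₁:ℤ) ∣ Q*x.2 + d₁ x.1) ∧ ((L₂:ℤ) ∣ Q*x.2 + d₂ x.1)) := by
    intro x _
    rw [← ind_and]
    apply ind_congr
    constructor
    · rintro ⟨⟨c1, c2⟩, ⟨c3, c4⟩⟩
      exact ⟨by rw [hcast]; exact hKK.mul_dvd c1 c3, c2, c4⟩
    · rintro ⟨c1, c2, c3⟩
      rw [hcast] at c1
      exact ⟨⟨dvd_trans (dvd_mul_right _ _) c1, c2⟩, ⟨dvd_trans (dvd_mul_left _ _) c1, c3⟩⟩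
  rw [Finset.sum_congr rfl pt, ← card_filter_indi]
  have h := elem_count N Q aa (K₁*K₂) L₁ L₂ (Nat.mul_pos hK₁ hK₂) hL₁ hL₂
    (by rw [show ((K₁*K₂:ℕ):ℤ) = (K₁:ℤ)*(K₂:ℤ) from hcast]; exact hQK₁.mul_right hQK₂)
    hQL₁ hQL₂ hLL d₁ d₂
  have e : (1/(((K₁*K₂:ℕ):ℝ))*((L₁:ℝ)*(L₂:ℝ))⁻¹) * (N:ℝ)^2
      = (1/((K₁:ℝ)*(L₁:ℝ)*(K₂:ℝ)*(L₂:ℝ))) * (N:ℝ)^2 := by push_cast; ring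
  have e2 : (1/(((K₁*K₂:ℕ):ℝ)*(L₁:ℝ)*(L₂:ℝ))) * (N:ℝ)^2
      = (1/((K₁:ℝ)*(L₁:ℝ)*(K₂:ℝ)*(L₂:ℝ))) * (N:ℝ)^2 := by push_cast; ring
  rw [e2] at h
  exact h

lemma SB1 (N : ℕ) (Q aa : ℤ) (K₁ L₁ : ℕ) (hK₁ : 0 < K₁) (hL₁ : 0 < L₁)
    (hQK₁ : IsCoprime Q (K₁:ℤ)) (hQL₁ : IsCoprime Q (L₁:ℤ)) :
    ∀ d₁ : ℕ → ℤ,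
    |(∑ x ∈ (Finset.Icc 1 N) ×ˢ (Finset.Icc 1 N),
        indi (((K₁:ℤ) ∣ Q*x.1 + aa) ∧ ((L₁:ℤ) ∣ Q*x.2 + d₁ x.1)))
      - (1/((K₁:ℝ)*(L₁:ℝ))) * (N:ℝ)^2| ≤ 2 * (N:ℝ) := by
  classical
  intro d₁
  have pt : ∀ x ∈ (Finset.Icc 1 N) ×ˢ (Finset.Icc 1 N),
      indi (((K₁:ℤ) ∣ Q*x.1 + aa) ∧ ((L₁:ℤ) ∣ Q*x.2 + d₁ x.1))
      = indi (((K₁:ℤ) ∣ Q*x.1 + aa) ∧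
          ((L₁:ℤ) ∣ Q*x.2 + d₁ x.1) ∧ (((1:ℕ):ℤ) ∣ Q*x.2 + 0)) := by
    intro x _
    apply ind_congr
    constructor
    · rintro ⟨c1, c2⟩; exact ⟨c1, c2, by simp⟩
    · rintro ⟨c1, c2, _⟩; exact ⟨c1, c2⟩
  rw [Finset.sum_congr rfl pt, ← card_filter_indi]
  have h := elem_count N Q aa K₁ L₁ 1 hK₁ hL₁ (by norm_num)
    hQK₁ hQL₁ (by simpa using isCoprime_one_right)
    (by simpa using isCoprime_one_right) d₁ (fun _ => 0)
  have e2 : (1/((K₁:ℝ)*(L₁:ℝ)*((1:ℕ):ℝ))) * (N:ℝ)^2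
      = (1/((K₁:ℝ)*(L₁:ℝ))) * (N:ℝ)^2 := by push_cast; ring
  rw [e2] at h
  exact h


lemma PW_piece (p : ℕ) (hp : p.Prime) (hodd : p ≠ 2) (J : ℤ) (hJ : ((p:ℤ))^2 ∣ J^2 + 1)
    (Q aa bb : ℤ) (m n : ℕ) :
    indi ((p:ℤ) ∣ (Q*n+bb) - J*(Q*m+aa) ∧ ¬ ((p:ℤ)^2 ∣ (Q*n+bb) - J*(Q*m+aa)) ∧
        ¬ ((p:ℤ) ∣ (Q*n+bb) + J*(Q*m+aa)))
    = indi ((((1:ℕ)):ℤ) ∣ Q*m+aa ∧ ((p:ℕ):ℤ) ∣ Q*n + (bb - J*(Q*(m:ℤ)+aa)))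
      - indi ((((1:ℕ)):ℤ) ∣ Q*m+aa ∧ ((p^2:ℕ):ℤ) ∣ Q*n + (bb - J*(Q*(m:ℤ)+aa)))
      - indi (((p:ℕ):ℤ) ∣ Q*m+aa ∧ ((p:ℕ):ℤ) ∣ Q*n + bb)
      + indi (((p:ℕ):ℤ) ∣ Q*m+aa ∧ ((p^2:ℕ):ℤ) ∣ Q*n + (bb - J*(Q*(m:ℤ)+aa))) := by
  have hc2 : ((p^2:ℕ):ℤ) = ((p:ℕ):ℤ)^2 := by push_cast; ring
  have hpp : ((p:ℕ):ℤ) ∣ ((p:ℕ):ℤ)^2 := dvd_pow_self _ two_ne_zero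
  have hring : Q*(n:ℤ) + (bb - J*(Q*(m:ℤ)+aa)) = (Q*n+bb) - J*(Q*m+aa) := by ring
  rw [ind_not3]
  have t1 : indi ((p:ℤ) ∣ (Q*(n:ℤ)+bb) - J*(Q*(m:ℤ)+aa))
      = indi ((((1:ℕ)):ℤ) ∣ Q*(m:ℤ)+aa ∧ ((p:ℕ):ℤ) ∣ Q*(n:ℤ) + (bb - J*(Q*(m:ℤ)+aa))) := by
    apply ind_congr
    constructor
    · intro h; exact ⟨one_dvd _, by rw [hring]; exact h⟩
    · rintro ⟨-, h⟩; rwa [hring] at h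
  have t2 : indi (((p:ℤ) ∣ (Q*(n:ℤ)+bb) - J*(Q*(m:ℤ)+aa)) ∧
        ((p:ℤ)^2 ∣ (Q*(n:ℤ)+bb) - J*(Q*(m:ℤ)+aa)))
      = indi ((((1:ℕ)):ℤ) ∣ Q*(m:ℤ)+aa ∧ ((p^2:ℕ):ℤ) ∣ Q*(n:ℤ) + (bb - J*(Q*(m:ℤ)+aa))) := by
    apply ind_congr
    constructor
    · rintro ⟨-, h⟩; exact ⟨one_dvd _, by rw [hc2, hring]; exact h⟩
    · rintro ⟨-, h⟩
      rw [hc2, hring] at h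
      exact ⟨dvd_trans hpp h, h⟩
  have t3 : indi (((p:ℤ) ∣ (Q*(n:ℤ)+bb) - J*(Q*(m:ℤ)+aa)) ∧
        ((p:ℤ) ∣ (Q*(n:ℤ)+bb) + J*(Q*(m:ℤ)+aa)))
      = indi (((p:ℕ):ℤ) ∣ Q*(m:ℤ)+aa ∧ ((p:ℕ):ℤ) ∣ Q*(n:ℤ) + bb) := by
    exact ind_congr (F1 p J hp hodd hJ _ _)
  have t4 : indi (((p:ℤ) ∣ (Q*(n:ℤ)+bb) - J*(Q*(m:ℤ)+aa)) ∧
        (((p:ℤ)^2 ∣ (Q*(n:ℤ)+bb) - J*(Q*(m:ℤ)+aa)) ∧ ((p:ℤ) ∣ (Q*(n:ℤ)+bb) + J*(Q*(m:ℤ)+aa))))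
      = indi (((p:ℕ):ℤ) ∣ Q*(m:ℤ)+aa ∧ ((p^2:ℕ):ℤ) ∣ Q*(n:ℤ) + (bb - J*(Q*(m:ℤ)+aa))) := by
    apply ind_congr
    constructor
    · rintro ⟨h1, h2, h3⟩
      exact ⟨((F1 p J hp hodd hJ _ _).mp ⟨h1, h3⟩).1, by rw [hc2, hring]; exact h2⟩
    · rintro ⟨h1, h2⟩
      rw [hc2, hring] at h2
      have hu : (p:ℤ) ∣ (Q*(n:ℤ)+bb) - J*(Q*(m:ℤ)+aa) := dvd_trans hpp h2
      refine ⟨hu, by rwa [← hc2, hc2], ?_⟩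
      have : (Q*(n:ℤ)+bb) + J*(Q*(m:ℤ)+aa)
          = ((Q*(n:ℤ)+bb) - J*(Q*(m:ℤ)+aa)) + (2*J)*(Q*(m:ℤ)+aa) := by ring
      rw [this]
      exact dvd_add hu (h1.mul_left _)
  rw [t1, t2, t3, t4]

lemma PWED (p : ℕ) (hp : p.Prime) (hodd : p ≠ 2) (J : ℤ) (hJ : ((p:ℤ))^2 ∣ J^2 + 1)
    (x y : ℤ) :
    indi (ExactlyDivides (p:ℤ) (x^2+y^2))
    = indi ((p:ℤ) ∣ y - J*x ∧ ¬ ((p:ℤ)^2 ∣ y - J*x) ∧ ¬ ((p:ℤ) ∣ y + J*x))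
      + indi ((p:ℤ) ∣ y - (-J)*x ∧ ¬ ((p:ℤ)^2 ∣ y - (-J)*x) ∧ ¬ ((p:ℤ) ∣ y + (-J)*x)) := by
  rw [ind_congr (exact_iff p J hp hodd hJ x y), ind_or (by tauto)]
  congr 1
  have e : y - (-J)*x = y + J*x := by ring
  have e' : y + (-J)*x = y - J*x := by ring
  rw [e, e']


lemma PIECE1 (N : ℕ) (Q aa bb : ℤ) (p : ℕ) (hp : p.Prime) (hodd : p ≠ 2)
    (J : ℤ) (hJ : ((p:ℤ))^2 ∣ J^2 + 1)
    (hQ1 : IsCoprime Q (((1:ℕ)):ℤ)) (hQp : IsCoprime Q ((p:ℕ):ℤ))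
    (hQp2 : IsCoprime Q ((p^2:ℕ):ℤ)) :
    |(∑ x ∈ (Finset.Icc 1 N) ×ˢ (Finset.Icc 1 N),
        indi ((p:ℤ) ∣ (Q*x.2+bb) - J*(Q*x.1+aa) ∧ ¬ ((p:ℤ)^2 ∣ (Q*x.2+bb) - J*(Q*x.1+aa)) ∧
          ¬ ((p:ℤ) ∣ (Q*x.2+bb) + J*(Q*x.1+aa))))
      - (1/(p:ℝ))*(1 - 1/(p:ℝ))^2 * (N:ℝ)^2| ≤ 8 * (N:ℝ) := by
  have hsum : (∑ x ∈ (Finset.Icc 1 N) ×ˢ (Finset.Icc 1 N),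
        indi ((p:ℤ) ∣ (Q*x.2+bb) - J*(Q*x.1+aa) ∧ ¬ ((p:ℤ)^2 ∣ (Q*x.2+bb) - J*(Q*x.1+aa)) ∧
          ¬ ((p:ℤ) ∣ (Q*x.2+bb) + J*(Q*x.1+aa))))
      = ∑ x ∈ (Finset.Icc 1 N) ×ˢ (Finset.Icc 1 N),
        (indi ((((1:ℕ)):ℤ) ∣ Q*x.1+aa ∧ ((p:ℕ):ℤ) ∣ Q*x.2 + (bb - J*(Q*(x.1:ℤ)+aa)))
        - indi ((((1:ℕ)):ℤ) ∣ Q*x.1+aa ∧ ((p^2:ℕ):ℤ) ∣ Q*x.2 + (bb - J*(Q*(x.1:ℤ)+aa)))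
        - indi (((p:ℕ):ℤ) ∣ Q*x.1+aa ∧ ((p:ℕ):ℤ) ∣ Q*x.2 + bb)
        + indi (((p:ℕ):ℤ) ∣ Q*x.1+aa ∧ ((p^2:ℕ):ℤ) ∣ Q*x.2 + (bb - J*(Q*(x.1:ℤ)+aa)))) :=
    Finset.sum_congr rfl (fun x _ => PW_piece p hp hodd J hJ Q aa bb x.1 x.2)
  rw [hsum]
  simp only [Finset.sum_add_distrib, Finset.sum_sub_distrib]
  have h1 := SB1 N Q aa 1 p one_pos hp.pos hQ1 hQp (fun m => bb - J*(Q*(m:ℤ)+aa))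
  have h2 := SB1 N Q aa 1 (p^2) one_pos (pow_pos hp.pos 2) hQ1 hQp2 (fun m => bb - J*(Q*(m:ℤ)+aa))
  have h3 := SB1 N Q aa p p hp.pos hp.pos hQp hQp (fun _ => bb)
  have h4 := SB1 N Q aa p (p^2) hp.pos (pow_pos hp.pos 2) hQp hQp2 (fun m => bb - J*(Q*(m:ℤ)+aa))
  beta_reduce at h1 h2 h3 h4
  have hp0 : ((p:ℕ):ℝ) ≠ 0 := by exact_mod_cast hp.pos.ne'
  have hT : (1/(p:ℝ))*(1 - 1/(p:ℝ))^2 * (N:ℝ)^2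
      = (1/((((1:ℕ)):ℝ)*((p:ℕ):ℝ))) * (N:ℝ)^2 - (1/((((1:ℕ)):ℝ)*((p^2:ℕ):ℝ))) * (N:ℝ)^2
        - (1/(((p:ℕ):ℝ)*((p:ℕ):ℝ))) * (N:ℝ)^2 + (1/(((p:ℕ):ℝ)*((p^2:ℕ):ℝ))) * (N:ℝ)^2 := by
    push_cast
    field_simp
    ring
  rw [abs_le] at h1 h2 h3 h4 ⊢
  obtain ⟨a1,b1⟩ := h1
  obtain ⟨a2,b2⟩ := h2
  obtain ⟨a3,b3⟩ := h3
  obtain ⟨a4,b4⟩ := h4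
  constructor <;> linarith [hT]


lemma prod_expand (e1 e2 e3 e4 f1 f2 f3 f4 : ℝ) :
    (e1 - e2 - e3 + e4) * (f1 - f2 - f3 + f4)
    = (e1*f1) - (e1*f2) - (e1*f3) + (e1*f4) - (e2*f1) + (e2*f2) + (e2*f3) - (e2*f4) - (e3*f1) + (e3*f2) + (e3*f3) - (e3*f4) + (e4*f1) - (e4*f2) - (e4*f3) + (e4*f4) := by ring

set_option maxHeartbeats 1600000 in
lemma PIECEPAIR (N : ℕ) (Q aa bb : ℤ) (p q : ℕ) (hp : p.Prime) (hq : q.Prime)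
    (hpodd : p ≠ 2) (hqodd : q ≠ 2) (J₁ J₂ : ℤ)
    (hJ₁ : ((p:ℤ))^2 ∣ J₁^2 + 1) (hJ₂ : ((q:ℤ))^2 ∣ J₂^2 + 1)
    (hQ1 : IsCoprime Q (((1:ℕ)):ℤ)) (hQp : IsCoprime Q ((p:ℕ):ℤ))
    (hQp2 : IsCoprime Q ((p^2:ℕ):ℤ)) (hQq : IsCoprime Q ((q:ℕ):ℤ))
    (hQq2 : IsCoprime Q ((q^2:ℕ):ℤ)) (hpq : Nat.Coprime p q) :
    |(∑ x ∈ (Finset.Icc 1 N) ×ˢ (Finset.Icc 1 N),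
        indi ((p:ℤ) ∣ (Q*x.2+bb) - J₁*(Q*x.1+aa) ∧ ¬ ((p:ℤ)^2 ∣ (Q*x.2+bb) - J₁*(Q*x.1+aa)) ∧
          ¬ ((p:ℤ) ∣ (Q*x.2+bb) + J₁*(Q*x.1+aa))) *
        indi ((q:ℤ) ∣ (Q*x.2+bb) - J₂*(Q*x.1+aa) ∧ ¬ ((q:ℤ)^2 ∣ (Q*x.2+bb) - J₂*(Q*x.1+aa)) ∧
          ¬ ((q:ℤ) ∣ (Q*x.2+bb) + J₂*(Q*x.1+aa))))
      - (1/(p:ℝ))*(1 - 1/(p:ℝ))^2 * ((1/(q:ℝ))*(1 - 1/(q:ℝ))^2) * (N:ℝ)^2| ≤ 32 * (N:ℝ) := by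
  have c1 : ∀ z : ℤ, IsCoprime (((1:ℕ)):ℤ) z := fun z => by simpa using isCoprime_one_left
  have c1' : ∀ z : ℤ, IsCoprime z (((1:ℕ)):ℤ) := fun z => by simpa using isCoprime_one_right
  have cpq : IsCoprime ((p:ℕ):ℤ) ((q:ℕ):ℤ) := Nat.isCoprime_iff_coprime.mpr hpq
  have cpq2 : IsCoprime ((p:ℕ):ℤ) ((q^2:ℕ):ℤ) :=
    Nat.isCoprime_iff_coprime.mpr (hpq.pow_right 2)
  have cp2q : IsCoprime ((p^2:ℕ):ℤ) ((q:ℕ):ℤ) :=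
    Nat.isCoprime_iff_coprime.mpr (hpq.pow_left 2)
  have cp2q2 : IsCoprime ((p^2:ℕ):ℤ) ((q^2:ℕ):ℤ) :=
    Nat.isCoprime_iff_coprime.mpr ((hpq.pow_left 2).pow_right 2)
  have hsum : (∑ x ∈ (Finset.Icc 1 N) ×ˢ (Finset.Icc 1 N),
        indi ((p:ℤ) ∣ (Q*x.2+bb) - J₁*(Q*x.1+aa) ∧ ¬ ((p:ℤ)^2 ∣ (Q*x.2+bb) - J₁*(Q*x.1+aa)) ∧
          ¬ ((p:ℤ) ∣ (Q*x.2+bb) + J₁*(Q*x.1+aa))) *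
        indi ((q:ℤ) ∣ (Q*x.2+bb) - J₂*(Q*x.1+aa) ∧ ¬ ((q:ℤ)^2 ∣ (Q*x.2+bb) - J₂*(Q*x.1+aa)) ∧
          ¬ ((q:ℤ) ∣ (Q*x.2+bb) + J₂*(Q*x.1+aa))))
      = ∑ x ∈ (Finset.Icc 1 N) ×ˢ (Finset.Icc 1 N),
        ((indi ((((1:ℕ)):ℤ) ∣ Q*x.1+aa ∧ ((p:ℕ):ℤ) ∣ Q*x.2 + (bb - J₁*(Q*(x.1:ℤ)+aa))) *
          indi ((((1:ℕ)):ℤ) ∣ Q*x.1+aa ∧ ((q:ℕ):ℤ) ∣ Q*x.2 + (bb - J₂*(Q*(x.1:ℤ)+aa))))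
        - (indi ((((1:ℕ)):ℤ) ∣ Q*x.1+aa ∧ ((p:ℕ):ℤ) ∣ Q*x.2 + (bb - J₁*(Q*(x.1:ℤ)+aa))) *
          indi ((((1:ℕ)):ℤ) ∣ Q*x.1+aa ∧ ((q^2:ℕ):ℤ) ∣ Q*x.2 + (bb - J₂*(Q*(x.1:ℤ)+aa))))
        - (indi ((((1:ℕ)):ℤ) ∣ Q*x.1+aa ∧ ((p:ℕ):ℤ) ∣ Q*x.2 + (bb - J₁*(Q*(x.1:ℤ)+aa))) *
          indi (((q:ℕ):ℤ) ∣ Q*x.1+aa ∧ ((q:ℕ):ℤ) ∣ Q*x.2 + bb))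
        + (indi ((((1:ℕ)):ℤ) ∣ Q*x.1+aa ∧ ((p:ℕ):ℤ) ∣ Q*x.2 + (bb - J₁*(Q*(x.1:ℤ)+aa))) *
          indi (((q:ℕ):ℤ) ∣ Q*x.1+aa ∧ ((q^2:ℕ):ℤ) ∣ Q*x.2 + (bb - J₂*(Q*(x.1:ℤ)+aa))))
        - (indi ((((1:ℕ)):ℤ) ∣ Q*x.1+aa ∧ ((p^2:ℕ):ℤ) ∣ Q*x.2 + (bb - J₁*(Q*(x.1:ℤ)+aa))) *
          indi ((((1:ℕ)):ℤ) ∣ Q*x.1+aa ∧ ((q:ℕ):ℤ) ∣ Q*x.2 + (bb - J₂*(Q*(x.1:ℤ)+aa))))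
        + (indi ((((1:ℕ)):ℤ) ∣ Q*x.1+aa ∧ ((p^2:ℕ):ℤ) ∣ Q*x.2 + (bb - J₁*(Q*(x.1:ℤ)+aa))) *
          indi ((((1:ℕ)):ℤ) ∣ Q*x.1+aa ∧ ((q^2:ℕ):ℤ) ∣ Q*x.2 + (bb - J₂*(Q*(x.1:ℤ)+aa))))
        + (indi ((((1:ℕ)):ℤ) ∣ Q*x.1+aa ∧ ((p^2:ℕ):ℤ) ∣ Q*x.2 + (bb - J₁*(Q*(x.1:ℤ)+aa))) *
          indi (((q:ℕ):ℤ) ∣ Q*x.1+aa ∧ ((q:ℕ):ℤ) ∣ Q*x.2 + bb))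
        - (indi ((((1:ℕ)):ℤ) ∣ Q*x.1+aa ∧ ((p^2:ℕ):ℤ) ∣ Q*x.2 + (bb - J₁*(Q*(x.1:ℤ)+aa))) *
          indi (((q:ℕ):ℤ) ∣ Q*x.1+aa ∧ ((q^2:ℕ):ℤ) ∣ Q*x.2 + (bb - J₂*(Q*(x.1:ℤ)+aa))))
        - (indi (((p:ℕ):ℤ) ∣ Q*x.1+aa ∧ ((p:ℕ):ℤ) ∣ Q*x.2 + bb) *
          indi ((((1:ℕ)):ℤ) ∣ Q*x.1+aa ∧ ((q:ℕ):ℤ) ∣ Q*x.2 + (bb - J₂*(Q*(x.1:ℤ)+aa))))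
        + (indi (((p:ℕ):ℤ) ∣ Q*x.1+aa ∧ ((p:ℕ):ℤ) ∣ Q*x.2 + bb) *
          indi ((((1:ℕ)):ℤ) ∣ Q*x.1+aa ∧ ((q^2:ℕ):ℤ) ∣ Q*x.2 + (bb - J₂*(Q*(x.1:ℤ)+aa))))
        + (indi (((p:ℕ):ℤ) ∣ Q*x.1+aa ∧ ((p:ℕ):ℤ) ∣ Q*x.2 + bb) *
          indi (((q:ℕ):ℤ) ∣ Q*x.1+aa ∧ ((q:ℕ):ℤ) ∣ Q*x.2 + bb))
        - (indi (((p:ℕ):ℤ) ∣ Q*x.1+aa ∧ ((p:ℕ):ℤ) ∣ Q*x.2 + bb) *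
          indi (((q:ℕ):ℤ) ∣ Q*x.1+aa ∧ ((q^2:ℕ):ℤ) ∣ Q*x.2 + (bb - J₂*(Q*(x.1:ℤ)+aa))))
        + (indi (((p:ℕ):ℤ) ∣ Q*x.1+aa ∧ ((p^2:ℕ):ℤ) ∣ Q*x.2 + (bb - J₁*(Q*(x.1:ℤ)+aa))) *
          indi ((((1:ℕ)):ℤ) ∣ Q*x.1+aa ∧ ((q:ℕ):ℤ) ∣ Q*x.2 + (bb - J₂*(Q*(x.1:ℤ)+aa))))
        - (indi (((p:ℕ):ℤ) ∣ Q*x.1+aa ∧ ((p^2:ℕ):ℤ) ∣ Q*x.2 + (bb - J₁*(Q*(x.1:ℤ)+aa))) *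
          indi ((((1:ℕ)):ℤ) ∣ Q*x.1+aa ∧ ((q^2:ℕ):ℤ) ∣ Q*x.2 + (bb - J₂*(Q*(x.1:ℤ)+aa))))
        - (indi (((p:ℕ):ℤ) ∣ Q*x.1+aa ∧ ((p^2:ℕ):ℤ) ∣ Q*x.2 + (bb - J₁*(Q*(x.1:ℤ)+aa))) *
          indi (((q:ℕ):ℤ) ∣ Q*x.1+aa ∧ ((q:ℕ):ℤ) ∣ Q*x.2 + bb))
        + (indi (((p:ℕ):ℤ) ∣ Q*x.1+aa ∧ ((p^2:ℕ):ℤ) ∣ Q*x.2 + (bb - J₁*(Q*(x.1:ℤ)+aa))) *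
          indi (((q:ℕ):ℤ) ∣ Q*x.1+aa ∧ ((q^2:ℕ):ℤ) ∣ Q*x.2 + (bb - J₂*(Q*(x.1:ℤ)+aa))))) :=
    Finset.sum_congr rfl (fun x _ => by
      rw [PW_piece p hp hpodd J₁ hJ₁ Q aa bb x.1 x.2, PW_piece q hq hqodd J₂ hJ₂ Q aa bb x.1 x.2,
        prod_expand])
  rw [hsum]
  simp only [Finset.sum_add_distrib, Finset.sum_sub_distrib]
  have h11 := SB N Q aa 1 p 1 q (one_pos) (hp.pos) (one_pos) (hq.pos) hQ1 hQp hQ1 hQq (c1 _) (cpq)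
    (fun m => bb - J₁*(Q*(m:ℤ)+aa)) (fun m => bb - J₂*(Q*(m:ℤ)+aa))
  have h12 := SB N Q aa 1 p 1 (q^2) (one_pos) (hp.pos) (one_pos) (pow_pos hq.pos 2) hQ1 hQp hQ1 hQq2 (c1 _) (cpq2)
    (fun m => bb - J₁*(Q*(m:ℤ)+aa)) (fun m => bb - J₂*(Q*(m:ℤ)+aa))
  have h13 := SB N Q aa 1 p q q (one_pos) (hp.pos) (hq.pos) hq.pos hQ1 hQp hQq hQq (c1 _) (cpq)
    (fun m => bb - J₁*(Q*(m:ℤ)+aa)) (fun _ => bb)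
  have h14 := SB N Q aa 1 p q (q^2) (one_pos) (hp.pos) (hq.pos) (pow_pos hq.pos 2) hQ1 hQp hQq hQq2 (c1 _) (cpq2)
    (fun m => bb - J₁*(Q*(m:ℤ)+aa)) (fun m => bb - J₂*(Q*(m:ℤ)+aa))
  have h21 := SB N Q aa 1 (p^2) 1 q (one_pos) (pow_pos hp.pos 2) (one_pos) (hq.pos) hQ1 hQp2 hQ1 hQq (c1 _) (cp2q)
    (fun m => bb - J₁*(Q*(m:ℤ)+aa)) (fun m => bb - J₂*(Q*(m:ℤ)+aa))
  have h22 := SB N Q aa 1 (p^2) 1 (q^2) (one_pos) (pow_pos hp.pos 2) (one_pos) (pow_pos hq.pos 2) hQ1 hQp2 hQ1 hQq2 (c1 _) (cp2q2)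
    (fun m => bb - J₁*(Q*(m:ℤ)+aa)) (fun m => bb - J₂*(Q*(m:ℤ)+aa))
  have h23 := SB N Q aa 1 (p^2) q q (one_pos) (pow_pos hp.pos 2) (hq.pos) hq.pos hQ1 hQp2 hQq hQq (c1 _) (cp2q)
    (fun m => bb - J₁*(Q*(m:ℤ)+aa)) (fun _ => bb)
  have h24 := SB N Q aa 1 (p^2) q (q^2) (one_pos) (pow_pos hp.pos 2) (hq.pos) (pow_pos hq.pos 2) hQ1 hQp2 hQq hQq2 (c1 _) (cp2q2)
    (fun m => bb - J₁*(Q*(m:ℤ)+aa)) (fun m => bb - J₂*(Q*(m:ℤ)+aa))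
  have h31 := SB N Q aa p p 1 q (hp.pos) hp.pos (one_pos) (hq.pos) hQp hQp hQ1 hQq (c1' _) (cpq)
    (fun _ => bb) (fun m => bb - J₂*(Q*(m:ℤ)+aa))
  have h32 := SB N Q aa p p 1 (q^2) (hp.pos) hp.pos (one_pos) (pow_pos hq.pos 2) hQp hQp hQ1 hQq2 (c1' _) (cpq2)
    (fun _ => bb) (fun m => bb - J₂*(Q*(m:ℤ)+aa))
  have h33 := SB N Q aa p p q q (hp.pos) hp.pos (hq.pos) hq.pos hQp hQp hQq hQq (cpq) (cpq)
    (fun _ => bb) (fun _ => bb)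
  have h34 := SB N Q aa p p q (q^2) (hp.pos) hp.pos (hq.pos) (pow_pos hq.pos 2) hQp hQp hQq hQq2 (cpq) (cpq2)
    (fun _ => bb) (fun m => bb - J₂*(Q*(m:ℤ)+aa))
  have h41 := SB N Q aa p (p^2) 1 q (hp.pos) (pow_pos hp.pos 2) (one_pos) (hq.pos) hQp hQp2 hQ1 hQq (c1' _) (cp2q)
    (fun m => bb - J₁*(Q*(m:ℤ)+aa)) (fun m => bb - J₂*(Q*(m:ℤ)+aa))
  have h42 := SB N Q aa p (p^2) 1 (q^2) (hp.pos) (pow_pos hp.pos 2) (one_pos) (pow_pos hq.pos 2) hQp hQp2 hQ1 hQq2 (c1' _) (cp2q2)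
    (fun m => bb - J₁*(Q*(m:ℤ)+aa)) (fun m => bb - J₂*(Q*(m:ℤ)+aa))
  have h43 := SB N Q aa p (p^2) q q (hp.pos) (pow_pos hp.pos 2) (hq.pos) hq.pos hQp hQp2 hQq hQq (cpq) (cp2q)
    (fun m => bb - J₁*(Q*(m:ℤ)+aa)) (fun _ => bb)
  have h44 := SB N Q aa p (p^2) q (q^2) (hp.pos) (pow_pos hp.pos 2) (hq.pos) (pow_pos hq.pos 2) hQp hQp2 hQq hQq2 (cpq) (cp2q2)
    (fun m => bb - J₁*(Q*(m:ℤ)+aa)) (fun m => bb - J₂*(Q*(m:ℤ)+aa))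
  beta_reduce at h11 h12 h13 h14 h21 h22 h23 h24 h31 h32 h33 h34 h41 h42 h43 h44
  have hp0 : ((p:ℕ):ℝ) ≠ 0 := by exact_mod_cast hp.pos.ne'
  have hq0 : ((q:ℕ):ℝ) ≠ 0 := by exact_mod_cast hq.pos.ne'
  have hT : (1/(p:ℝ))*(1 - 1/(p:ℝ))^2 * ((1/(q:ℝ))*(1 - 1/(q:ℝ))^2) * (N:ℝ)^2
      = (1/((((1:ℕ)):ℝ)*((p:ℕ):ℝ)*(((1:ℕ)):ℝ)*((q:ℕ):ℝ))) * (N:ℝ)^2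
        - (1/((((1:ℕ)):ℝ)*((p:ℕ):ℝ)*(((1:ℕ)):ℝ)*((q^2:ℕ):ℝ))) * (N:ℝ)^2
        - (1/((((1:ℕ)):ℝ)*((p:ℕ):ℝ)*((q:ℕ):ℝ)*((q:ℕ):ℝ))) * (N:ℝ)^2
        + (1/((((1:ℕ)):ℝ)*((p:ℕ):ℝ)*((q:ℕ):ℝ)*((q^2:ℕ):ℝ))) * (N:ℝ)^2
        - (1/((((1:ℕ)):ℝ)*((p^2:ℕ):ℝ)*(((1:ℕ)):ℝ)*((q:ℕ):ℝ))) * (N:ℝ)^2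
        + (1/((((1:ℕ)):ℝ)*((p^2:ℕ):ℝ)*(((1:ℕ)):ℝ)*((q^2:ℕ):ℝ))) * (N:ℝ)^2
        + (1/((((1:ℕ)):ℝ)*((p^2:ℕ):ℝ)*((q:ℕ):ℝ)*((q:ℕ):ℝ))) * (N:ℝ)^2
        - (1/((((1:ℕ)):ℝ)*((p^2:ℕ):ℝ)*((q:ℕ):ℝ)*((q^2:ℕ):ℝ))) * (N:ℝ)^2
        - (1/(((p:ℕ):ℝ)*((p:ℕ):ℝ)*(((1:ℕ)):ℝ)*((q:ℕ):ℝ))) * (N:ℝ)^2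
        + (1/(((p:ℕ):ℝ)*((p:ℕ):ℝ)*(((1:ℕ)):ℝ)*((q^2:ℕ):ℝ))) * (N:ℝ)^2
        + (1/(((p:ℕ):ℝ)*((p:ℕ):ℝ)*((q:ℕ):ℝ)*((q:ℕ):ℝ))) * (N:ℝ)^2
        - (1/(((p:ℕ):ℝ)*((p:ℕ):ℝ)*((q:ℕ):ℝ)*((q^2:ℕ):ℝ))) * (N:ℝ)^2
        + (1/(((p:ℕ):ℝ)*((p^2:ℕ):ℝ)*(((1:ℕ)):ℝ)*((q:ℕ):ℝ))) * (N:ℝ)^2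
        - (1/(((p:ℕ):ℝ)*((p^2:ℕ):ℝ)*(((1:ℕ)):ℝ)*((q^2:ℕ):ℝ))) * (N:ℝ)^2
        - (1/(((p:ℕ):ℝ)*((p^2:ℕ):ℝ)*((q:ℕ):ℝ)*((q:ℕ):ℝ))) * (N:ℝ)^2
        + (1/(((p:ℕ):ℝ)*((p^2:ℕ):ℝ)*((q:ℕ):ℝ)*((q^2:ℕ):ℝ))) * (N:ℝ)^2 := by
    push_cast
    field_simp
    ring
  rw [abs_le] at h11 h12 h13 h14 h21 h22 h23 h24 h31 h32 h33 h34 h41 h42 h43 h44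
  obtain ⟨ah11, bh11⟩ := h11
  obtain ⟨ah12, bh12⟩ := h12
  obtain ⟨ah13, bh13⟩ := h13
  obtain ⟨ah14, bh14⟩ := h14
  obtain ⟨ah21, bh21⟩ := h21
  obtain ⟨ah22, bh22⟩ := h22
  obtain ⟨ah23, bh23⟩ := h23
  obtain ⟨ah24, bh24⟩ := h24
  obtain ⟨ah31, bh31⟩ := h31
  obtain ⟨ah32, bh32⟩ := h32
  obtain ⟨ah33, bh33⟩ := h33
  obtain ⟨ah34, bh34⟩ := h34
  obtain ⟨ah41, bh41⟩ := h41
  obtain ⟨ah42, bh42⟩ := h42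
  obtain ⟨ah43, bh43⟩ := h43
  obtain ⟨ah44, bh44⟩ := h44
  rw [abs_le]
  constructor <;> linarith [hT]

lemma final_div (T : ℝ) (N : ℕ) (hN : 0 < N) (B : ℝ) (hB : 0 ≤ B) (hB2 : B ≤ 200) :
    ∀ c : ℝ, |c - T*(N:ℝ)^2| ≤ B*(N:ℝ) → |c/(N:ℝ)^2 - T| ≤ 200/(N:ℝ) := by
  intro c h
  have hN0 : (0:ℝ) < N := by exact_mod_cast hN
  have e : c/(N:ℝ)^2 - T = (c - T*(N:ℝ)^2)/(N:ℝ)^2 := by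
    field_simp
  rw [e, abs_div, abs_of_pos (by positivity : (0:ℝ) < (N:ℝ)^2)]
  rw [div_le_div_iff₀ (by positivity) hN0]
  have habs : (0:ℝ) ≤ |c - T*(N:ℝ)^2| := abs_nonneg _
  nlinarith [h, hN0.le]

end aux

/-- **Lemma 4.1.** There is an absolute constant `C > 0` such that for all `Q, N ∈ ℕ`,
integers `a, b`, and primes `p, q ≡ 1 (mod 4)` with `gcd(pq, Q) = 1`:
`|w_{N,Q}(p,p) − (2/p)(1 − 1/p)²| ≤ C/N`, and if `p ≠ q` then
`|w_{N,Q}(p,q) − (4/(pq))(1 − 1/p)²(1 − 1/q)²| ≤ C/N`. -/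
theorem counting_exact_divisors_sums_of_squares :
    ∃ C : ℝ, 0 < C ∧
      ∀ (Q N : ℕ) (a b : ℤ) (p q : ℕ), 0 < Q → 0 < N →
        p.Prime → q.Prime → p % 4 = 1 → q % 4 = 1 → Nat.Coprime (p * q) Q →
        (|wPair Q N a b p p - (2 / (p : ℝ)) * (1 - 1 / (p : ℝ)) ^ 2| ≤ C / (N : ℝ)) ∧
        (p ≠ q →
          |wPair Q N a b p q -
            (4 / ((p : ℝ) * (q : ℝ))) * (1 - 1 / (p : ℝ)) ^ 2 * (1 - 1 / (q : ℝ)) ^ 2|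
            ≤ C / (N : ℝ)) := by
  classical
  refine ⟨200, by norm_num, ?_⟩
  intro Q N a b p q hQ hN hp hq hp4 hq4 hQco
  have hpodd : p ≠ 2 := by omega
  have hqodd : q ≠ 2 := by omega
  obtain ⟨J₁, hJ₁⟩ := exists_sqrt_neg_one p hp hp4
  obtain ⟨J₂, hJ₂⟩ := exists_sqrt_neg_one q hq hq4
  have hJ₁' : ((p:ℤ))^2 ∣ (-J₁)^2 + 1 := by rwa [show (-J₁)^2 = J₁^2 by ring]
  have hJ₂' : ((q:ℤ))^2 ∣ (-J₂)^2 + 1 := by rwa [show (-J₂)^2 = J₂^2 by ring]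
  have hpQ : Nat.Coprime p Q := Nat.Coprime.coprime_dvd_left (dvd_mul_right p q) hQco
  have hqQ : Nat.Coprime q Q := Nat.Coprime.coprime_dvd_left (dvd_mul_left q p) hQco
  have hQ1 : IsCoprime ((Q:ℕ):ℤ) (((1:ℕ)):ℤ) := by simpa using isCoprime_one_right
  have hQp : IsCoprime ((Q:ℕ):ℤ) ((p:ℕ):ℤ) := (Nat.isCoprime_iff_coprime.mpr hpQ).symm
  have hQp2 : IsCoprime ((Q:ℕ):ℤ) ((p^2:ℕ):ℤ) :=
    (Nat.isCoprime_iff_coprime.mpr (hpQ.pow_left 2)).symm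
  have hQq : IsCoprime ((Q:ℕ):ℤ) ((q:ℕ):ℤ) := (Nat.isCoprime_iff_coprime.mpr hqQ).symm
  have hQq2 : IsCoprime ((Q:ℕ):ℤ) ((q^2:ℕ):ℤ) :=
    (Nat.isCoprime_iff_coprime.mpr (hqQ.pow_left 2)).symm
  constructor
  · -- the case q = p
    refine final_div _ N hN 16 (by norm_num) (by norm_num) _ ?_
    rw [card_filter_indi]
    beta_reduce
    have pt : ∀ x ∈ (Finset.Icc 1 N) ×ˢ (Finset.Icc 1 N),
        indi (ExactlyDivides (↑p) (((Q:ℤ)*x.1 + a)^2 + ((Q:ℤ)*x.2 + b)^2) ∧ ExactlyDivides (↑p) (((Q:ℤ)*x.1 + a)^2 + ((Q:ℤ)*x.2 + b)^2))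
        = indi ((p:ℤ) ∣ ((Q:ℤ)*x.2+b) - J₁*((Q:ℤ)*x.1+a) ∧ ¬ ((p:ℤ)^2 ∣ ((Q:ℤ)*x.2+b) - J₁*((Q:ℤ)*x.1+a)) ∧ ¬ ((p:ℤ) ∣ ((Q:ℤ)*x.2+b) + J₁*((Q:ℤ)*x.1+a)))
          + indi ((p:ℤ) ∣ ((Q:ℤ)*x.2+b) - (-J₁)*((Q:ℤ)*x.1+a) ∧ ¬ ((p:ℤ)^2 ∣ ((Q:ℤ)*x.2+b) - (-J₁)*((Q:ℤ)*x.1+a)) ∧ ¬ ((p:ℤ) ∣ ((Q:ℤ)*x.2+b) + (-J₁)*((Q:ℤ)*x.1+a))) := by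
      intro x _
      rw [ind_congr and_self_iff]
      exact PWED p hp hpodd J₁ hJ₁ ((Q:ℤ)*x.1 + a) ((Q:ℤ)*x.2 + b)
    rw [Finset.sum_congr rfl pt]
    simp only [Finset.sum_add_distrib]
    have k1 := PIECE1 N (Q:ℤ) a b p hp hpodd J₁ hJ₁ hQ1 hQp hQp2
    have k2 := PIECE1 N (Q:ℤ) a b p hp hpodd (-J₁) hJ₁' hQ1 hQp hQp2
    have hT : (2 / (p:ℝ)) * (1 - 1/(p:ℝ))^2 * (N:ℝ)^2
        = 2*((1/(p:ℝ))*(1 - 1/(p:ℝ))^2 * (N:ℝ)^2) := by ring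
    rw [abs_le] at k1 k2 ⊢
    obtain ⟨a1, b1⟩ := k1
    obtain ⟨a2, b2⟩ := k2
    constructor <;> linarith [hT]
  · -- the case p ≠ q
    intro hne
    have hpq : Nat.Coprime p q := (Nat.coprime_primes hp hq).mpr hne
    refine final_div _ N hN 128 (by norm_num) (by norm_num) _ ?_
    rw [card_filter_indi]
    beta_reduce
    have pt : ∀ x ∈ (Finset.Icc 1 N) ×ˢ (Finset.Icc 1 N),
        indi (ExactlyDivides (↑p) (((Q:ℤ)*x.1 + a)^2 + ((Q:ℤ)*x.2 + b)^2) ∧ ExactlyDivides (↑q) (((Q:ℤ)*x.1 + a)^2 + ((Q:ℤ)*x.2 + b)^2))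
        = indi ((p:ℤ) ∣ ((Q:ℤ)*x.2+b) - J₁*((Q:ℤ)*x.1+a) ∧ ¬ ((p:ℤ)^2 ∣ ((Q:ℤ)*x.2+b) - J₁*((Q:ℤ)*x.1+a)) ∧ ¬ ((p:ℤ) ∣ ((Q:ℤ)*x.2+b) + J₁*((Q:ℤ)*x.1+a))) * indi ((q:ℤ) ∣ ((Q:ℤ)*x.2+b) - J₂*((Q:ℤ)*x.1+a) ∧ ¬ ((q:ℤ)^2 ∣ ((Q:ℤ)*x.2+b) - J₂*((Q:ℤ)*x.1+a)) ∧ ¬ ((q:ℤ) ∣ ((Q:ℤ)*x.2+b) + J₂*((Q:ℤ)*x.1+a)))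
          + indi ((p:ℤ) ∣ ((Q:ℤ)*x.2+b) - J₁*((Q:ℤ)*x.1+a) ∧ ¬ ((p:ℤ)^2 ∣ ((Q:ℤ)*x.2+b) - J₁*((Q:ℤ)*x.1+a)) ∧ ¬ ((p:ℤ) ∣ ((Q:ℤ)*x.2+b) + J₁*((Q:ℤ)*x.1+a))) * indi ((q:ℤ) ∣ ((Q:ℤ)*x.2+b) - (-J₂)*((Q:ℤ)*x.1+a) ∧ ¬ ((q:ℤ)^2 ∣ ((Q:ℤ)*x.2+b) - (-J₂)*((Q:ℤ)*x.1+a)) ∧ ¬ ((q:ℤ) ∣ ((Q:ℤ)*x.2+b) + (-J₂)*((Q:ℤ)*x.1+a)))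
          + indi ((p:ℤ) ∣ ((Q:ℤ)*x.2+b) - (-J₁)*((Q:ℤ)*x.1+a) ∧ ¬ ((p:ℤ)^2 ∣ ((Q:ℤ)*x.2+b) - (-J₁)*((Q:ℤ)*x.1+a)) ∧ ¬ ((p:ℤ) ∣ ((Q:ℤ)*x.2+b) + (-J₁)*((Q:ℤ)*x.1+a))) * indi ((q:ℤ) ∣ ((Q:ℤ)*x.2+b) - J₂*((Q:ℤ)*x.1+a) ∧ ¬ ((q:ℤ)^2 ∣ ((Q:ℤ)*x.2+b) - J₂*((Q:ℤ)*x.1+a)) ∧ ¬ ((q:ℤ) ∣ ((Q:ℤ)*x.2+b) + J₂*((Q:ℤ)*x.1+a)))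
          + indi ((p:ℤ) ∣ ((Q:ℤ)*x.2+b) - (-J₁)*((Q:ℤ)*x.1+a) ∧ ¬ ((p:ℤ)^2 ∣ ((Q:ℤ)*x.2+b) - (-J₁)*((Q:ℤ)*x.1+a)) ∧ ¬ ((p:ℤ) ∣ ((Q:ℤ)*x.2+b) + (-J₁)*((Q:ℤ)*x.1+a))) * indi ((q:ℤ) ∣ ((Q:ℤ)*x.2+b) - (-J₂)*((Q:ℤ)*x.1+a) ∧ ¬ ((q:ℤ)^2 ∣ ((Q:ℤ)*x.2+b) - (-J₂)*((Q:ℤ)*x.1+a)) ∧ ¬ ((q:ℤ) ∣ ((Q:ℤ)*x.2+b) + (-J₂)*((Q:ℤ)*x.1+a))) := by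
      intro x _
      rw [ind_and,
        PWED p hp hpodd J₁ hJ₁ ((Q:ℤ)*x.1 + a) ((Q:ℤ)*x.2 + b),
        PWED q hq hqodd J₂ hJ₂ ((Q:ℤ)*x.1 + a) ((Q:ℤ)*x.2 + b)]
      ring
    rw [Finset.sum_congr rfl pt]
    simp only [Finset.sum_add_distrib]
    have k1 := PIECEPAIR N (Q:ℤ) a b p q hp hq hpodd hqodd J₁ J₂ hJ₁ hJ₂ hQ1 hQp hQp2 hQq hQq2 hpq
    have k2 := PIECEPAIR N (Q:ℤ) a b p q hp hq hpodd hqodd J₁ (-J₂) hJ₁ hJ₂' hQ1 hQp hQp2 hQq hQq2 hpq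
    have k3 := PIECEPAIR N (Q:ℤ) a b p q hp hq hpodd hqodd (-J₁) J₂ hJ₁' hJ₂ hQ1 hQp hQp2 hQq hQq2 hpq
    have k4 := PIECEPAIR N (Q:ℤ) a b p q hp hq hpodd hqodd (-J₁) (-J₂) hJ₁' hJ₂' hQ1 hQp hQp2 hQq hQq2 hpq
    have hT : (4 / ((p:ℝ) * (q:ℝ))) * (1 - 1/(p:ℝ))^2 * (1 - 1/(q:ℝ))^2 * (N:ℝ)^2
        = 4*((1/(p:ℝ))*(1 - 1/(p:ℝ))^2 * ((1/(q:ℝ))*(1 - 1/(q:ℝ))^2) * (N:ℝ)^2) := by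
      ring
    rw [abs_le] at k1 k2 k3 k4 ⊢
    obtain ⟨a1, b1⟩ := k1
    obtain ⟨a2, b2⟩ := k2
    obtain ⟨a3, b3⟩ := k3
    obtain ⟨a4, b4⟩ := k4
    constructor <;> linarith [hT]
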